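/- For n ≥ 1, the polynomial a_n(y) = (y+1)·Σ_{i=1}^n i!·S(n,i)·2^{n-i}·(y-1)^i satisfies a_n(y) = Σ_{k=1}^{n} A(n,k)(y-1)^k (y+1)^{n-k+1}, where A(n,k) is the number of permutations of {1,...,n} with exactly k-1 descents. -/

import Mathlib

open Polynomial Finset

/-- Derivative polynomials for tangent: `P 0 = X`, `P (n+1) = (1+X^2) * (P n)'`. -/
noncomputable def P : ℕ → Polynomial ℝ
  | 0 => Polynomial.X
  | n + 1 => (1 + Polynomial.X ^ 2) * (P n).derivative

/-- The values of a permutation of `Fin n`, as a function `ℕ → ℕ` (junk value `0` off-range). -/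
def permVal {n : ℕ} (π : Equiv.Perm (Fin n)) : ℕ → ℕ :=
  fun j => if h : j < n then (π ⟨j, h⟩ : ℕ) else 0

/-- The number of alternating runs of a permutation of `{1,…,n}` (0-indexed positions):
one more than the number of interior positions where the permutation changes direction.
By convention this is `0` when `n ≤ 1`. -/
def runs (n : ℕ) (π : Equiv.Perm (Fin n)) : ℕ :=
  if n ≤ 1 then 0 else
    1 + ((Finset.Ico 1 (n - 1)).filter (fun i =>
      (permVal π (i - 1) < permVal π i ∧ permVal π (i + 1) < permVal π i) ∨
      (permVal π i < permVal π (i - 1) ∧ permVal π i < permVal π (i + 1)))).card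

/-- `R n k`: the number of permutations of `{1,…,n}` with exactly `k` alternating runs. -/
def R (n k : ℕ) : ℕ :=
  (Finset.univ.filter (fun π : Equiv.Perm (Fin n) => runs n π = k)).card

/-- The generating polynomial `R_n(x) = ∑_k R(n,k) x^k`. -/
noncomputable def Rpoly (n : ℕ) : Polynomial ℝ :=
  ∑ k ∈ Finset.range n, Polynomial.C ((R n k : ℝ)) * Polynomial.X ^ k

/-- Stirling numbers of the second kind. -/
def stirling2 : ℕ → ℕ → ℕ
  | 0, 0 => 1
  | 0, _ + 1 => 0
  | _ + 1, 0 => 0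
  | n + 1, k + 1 => (k + 1) * stirling2 n (k + 1) + stirling2 n k

/-- The number of descents of a permutation of `Fin n`. -/
def des (n : ℕ) (π : Equiv.Perm (Fin n)) : ℕ :=
  ((Finset.range (n - 1)).filter (fun i => permVal π (i + 1) < permVal π i)).card

/-- Eulerian numbers: `A(n,k)` is the number of permutations of `{1,…,n}` with `k-1` descents. -/
def Anum (n k : ℕ) : ℕ :=
  (Finset.univ.filter (fun π : Equiv.Perm (Fin n) => des n π + 1 = k)).card

section Ins
variable {n : ℕ}

/-- forward map: insert value `n` at position `p`. -/
def insF (π : Equiv.Perm (Fin n)) (p : Fin (n+1)) (j : Fin (n+1)) : Fin (n+1) :=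
  if h0 : j.val = p.val then Fin.last n
  else if h1 : j.val < p.val then
    (π ⟨j.val, by have := p.isLt; omega⟩).castSucc
  else (π ⟨j.val - 1, by have := j.isLt; omega⟩).castSucc

def insInv (π : Equiv.Perm (Fin n)) (p : Fin (n+1)) (y : Fin (n+1)) : Fin (n+1) :=
  if h : y.val = n then p
  else
    if (π.symm ⟨y.val, by have := y.isLt; omega⟩).val < p.val then
      ⟨(π.symm ⟨y.val, by have := y.isLt; omega⟩).val, by
        have := (π.symm ⟨y.val, by have := y.isLt; omega⟩).isLt; omega⟩
    else ⟨(π.symm ⟨y.val, by have := y.isLt; omega⟩).val + 1, by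
        have := (π.symm ⟨y.val, by have := y.isLt; omega⟩).isLt; omega⟩

lemma insF_left (π : Equiv.Perm (Fin n)) (p : Fin (n+1)) (j : Fin (n+1)) :
    insInv π p (insF π p j) = j := by
  unfold insF
  by_cases h0 : j.val = p.val
  · rw [dif_pos h0]
    unfold insInv
    rw [dif_pos (Fin.val_last n)]
    exact Fin.ext h0.symm
  · rw [dif_neg h0]
    by_cases h1 : j.val < p.val
    · rw [dif_pos h1]
      unfold insInv
      have hv : ((π ⟨j.val, by have := p.isLt; omega⟩).castSucc).val ≠ n := by
        simpa using (π _).isLt.ne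
      rw [dif_neg hv]
      simp only [Fin.coe_castSucc, Fin.eta, Equiv.symm_apply_apply, Fin.val_mk]
      rw [if_pos h1]
    · rw [dif_neg h1]
      unfold insInv
      have hv : ((π ⟨j.val - 1, by have := j.isLt; omega⟩).castSucc).val ≠ n := by
        simpa using (π _).isLt.ne
      rw [dif_neg hv]
      simp only [Fin.coe_castSucc, Fin.eta, Equiv.symm_apply_apply, Fin.val_mk]
      rw [if_neg (by omega)]
      exact Fin.ext (by simp; omega)

lemma insF_right (π : Equiv.Perm (Fin n)) (p : Fin (n+1)) (y : Fin (n+1)) :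
    insF π p (insInv π p y) = y := by
  unfold insInv
  by_cases h : y.val = n
  · rw [dif_pos h]
    unfold insF
    rw [dif_pos rfl]
    exact Fin.ext (by simp [h])
  · rw [dif_neg h]
    set i := π.symm ⟨y.val, by have := y.isLt; omega⟩ with hi
    by_cases h2 : i.val < p.val
    · rw [if_pos h2]
      unfold insF
      rw [dif_neg (by simp; omega), dif_pos (by simpa using h2)]
      apply Fin.ext
      simp only [Fin.coe_castSucc]
      have : (⟨i.val, i.isLt⟩ : Fin n) = i := Fin.ext rfl
      rw [this, hi, Equiv.apply_symm_apply]
    · rw [if_neg h2]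
      unfold insF
      rw [dif_neg (by simp; omega), dif_neg (by simp; omega)]
      apply Fin.ext
      simp only [Fin.coe_castSucc]
      have : (⟨i.val + 1 - 1, by have := i.isLt; omega⟩ : Fin n) = i := Fin.ext (by simp)
      rw [this, hi, Equiv.apply_symm_apply]

/-- Insert the maximal value `n` at position `p` in the one-line word of `π`. -/
def insPerm (π : Equiv.Perm (Fin n)) (p : Fin (n+1)) : Equiv.Perm (Fin (n+1)) :=
  ⟨insF π p, insInv π p, insF_left π p, insF_right π p⟩

lemma permVal_lt {π : Equiv.Perm (Fin n)} {j : ℕ} (hj : j < n) : permVal π j < n := by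
  simp only [permVal, dif_pos hj]; exact (π _).isLt

lemma permVal_insPerm (π : Equiv.Perm (Fin n)) (p : Fin (n+1)) (j : ℕ) (hj : j ≤ n) :
    permVal (insPerm π p) j =
      if j < p.val then permVal π j else if j = p.val then n else permVal π (j - 1) := by
  have hj1 : j < n + 1 := by omega
  simp only [permVal, dif_pos hj1]
  show ((insF π p ⟨j, hj1⟩ : Fin (n+1)) : ℕ) = _
  unfold insF
  by_cases h0 : j = p.val
  · rw [dif_pos h0, if_neg (by omega), if_pos h0]; simp
  · rw [dif_neg h0]
    by_cases h1 : j < p.val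
    · rw [dif_pos h1, if_pos h1]
      have hjn : j < n := by have := p.isLt; omega
      rw [dif_pos hjn]
      simp
    · rw [dif_neg h1, if_neg h1, if_neg h0]
      have hjn : j - 1 < n := by have := p.isLt; omega
      rw [dif_pos hjn]
      simp

end Ins
section Des
variable {n : ℕ}

lemma des_insPerm (hn : 1 ≤ n) (π : Equiv.Perm (Fin n)) (p : Fin (n+1)) :
    des (n+1) (insPerm π p) =
      des n π + (if p.val < n ∧ ¬(1 ≤ p.val ∧ permVal π p.val < permVal π (p.val - 1))
        then 1 else 0) := by
  have hpn : p.val ≤ n := by have := p.isLt; omega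
  set σ := insPerm π p with hσ
  set D := (range (n-1)).filter (fun j => permVal π (j+1) < permVal π j) with hD
  set θ : ℕ → ℕ := fun j => if j + 1 < p.val then j else j + 1 with hθ
  have hDmem : ∀ x, x ∈ D ↔ (x < n - 1 ∧ permVal π (x+1) < permVal π x) := by
    intro x; rw [hD]; simp [mem_filter, mem_range]
  have himage : ∀ x, x ∈ D.image θ ↔
      ((x + 1 < p.val ∧ x ∈ D) ∨ (p.val ≤ x ∧ 1 ≤ x ∧ x - 1 ∈ D)) := by
    intro x
    simp only [mem_image]
    constructor
    · rintro ⟨j, hj, rfl⟩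
      by_cases hc : j + 1 < p.val
      · exact Or.inl (by simp [hθ, hc, hj])
      · refine Or.inr ?_
        simp only [hθ, if_neg hc]
        exact ⟨by omega, by omega, by simpa using hj⟩
    · rintro (⟨h1, h2⟩ | ⟨h1, h2, h3⟩)
      · exact ⟨x, h2, by simp [hθ, h1]⟩
      · exact ⟨x - 1, h3, by simp only [hθ]; rw [if_neg (by omega)]; omega⟩
  have hQ : ∀ x, x < n → (permVal σ (x+1) < permVal σ x ↔
      (x ∈ D.image θ ∨ (x = p.val ∧ p.val < n))) := by
    intro x hx
    rw [hσ, permVal_insPerm π p (x+1) (by omega), permVal_insPerm π p x (by omega)]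
    rcases Nat.lt_trichotomy (x+1) p.val with hxp | hxp | hxp
    · rw [if_pos hxp, if_pos (by omega)]
      rw [himage]
      constructor
      · intro h
        exact Or.inl (Or.inl ⟨hxp, (hDmem x).2 ⟨by omega, h⟩⟩)
      · rintro ((⟨_, hd⟩ | ⟨h1, _, _⟩) | ⟨rfl, _⟩)
        · exact ((hDmem x).1 hd).2
        · omega
        · omega
    · rw [if_neg (by omega), if_pos (by omega), if_pos (by omega)]
      have : permVal π x < n := permVal_lt (by omega)
      rw [himage]
      constructor
      · intro h; omega
      · rintro ((⟨h1, _⟩ | ⟨h1, _, _⟩) | ⟨rfl, _⟩) <;> omega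
    · rw [if_neg (by omega), if_neg (by omega)]
      by_cases hxe : x = p.val
      · rw [if_neg (by omega), if_pos hxe]
        have : permVal π (x + 1 - 1) < n := permVal_lt (by omega)
        constructor
        · intro _; exact Or.inr ⟨hxe, by omega⟩
        · intro _; omega
      · rw [if_neg (by omega), if_neg hxe]
        have hx1 : p.val < x := by omega
        rw [himage]
        have hsimp : x + 1 - 1 = (x - 1) + 1 := by omega
        rw [hsimp]
        constructor
        · intro h
          exact Or.inl (Or.inr ⟨by omega, by omega, (hDmem _).2 ⟨by omega, h⟩⟩)
        · rintro ((⟨h1, _⟩ | ⟨_, _, hd⟩) | ⟨rfl, _⟩)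
          · omega
          · exact ((hDmem _).1 hd).2
          · omega
  have hθinj : Function.Injective θ := by
    intro a b hab; simp only [hθ] at hab; split_ifs at hab <;> omega
  have hdes : des n π = D.card := rfl
  have hdes1 : des (n+1) σ = ((range n).filter
      (fun x => permVal σ (x+1) < permVal σ x)).card := by
    rw [des]; norm_num
  rw [hdes1]
  by_cases hc : p.val < n ∧ ¬(1 ≤ p.val ∧ permVal π p.val < permVal π (p.val - 1))
  · rw [if_pos hc]
    have hfilt : (range n).filter (fun x => permVal σ (x+1) < permVal σ x) =
        insert p.val (D.image θ) := by
      ext x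
      simp only [mem_filter, mem_range, mem_insert]
      constructor
      · rintro ⟨hx, hQx⟩
        rcases (hQ x hx).1 hQx with h | h
        · exact Or.inr h
        · exact Or.inl h.1
      · rintro (rfl | hx)
        · exact ⟨hc.1, (hQ p.val hc.1).2 (Or.inr ⟨rfl, hc.1⟩)⟩
        · have hb : x < n := by
            rcases (himage x).1 hx with ⟨_, hd⟩ | ⟨_, _, hd⟩
            · have := (hDmem x).1 hd; omega
            · have := (hDmem _).1 hd; omega
          exact ⟨hb, (hQ x hb).2 (Or.inl hx)⟩
    rw [hfilt, Finset.card_insert_of_notMem, Finset.card_image_of_injective _ hθinj, hdes]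
    intro hmem
    rcases (himage p.val).1 hmem with ⟨h1, _⟩ | ⟨_, h2, hd⟩
    · omega
    · have := (hDmem _).1 hd
      have : permVal π (p.val - 1 + 1) < permVal π (p.val - 1) := this.2
      rw [show p.val - 1 + 1 = p.val by omega] at this
      exact hc.2 ⟨h2, this⟩
  · rw [if_neg hc]
    have hfilt : (range n).filter (fun x => permVal σ (x+1) < permVal σ x) = D.image θ := by
      ext x
      simp only [mem_filter, mem_range]
      constructor
      · rintro ⟨hx, hQx⟩
        rcases (hQ x hx).1 hQx with h | ⟨rfl, hpn'⟩
        · exact h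
        · have hc2 : 1 ≤ p.val ∧ permVal π p.val < permVal π (p.val - 1) := by
            by_contra hh; exact hc ⟨hpn', hh⟩
          refine (himage p.val).2 (Or.inr ⟨le_refl _, hc2.1, ?_⟩)
          refine (hDmem _).2 ⟨by omega, ?_⟩
          rw [show p.val - 1 + 1 = p.val by omega]
          exact hc2.2
      · intro hx
        have hb : x < n := by
          rcases (himage x).1 hx with ⟨_, hd⟩ | ⟨_, _, hd⟩
          · have := (hDmem x).1 hd; omega
          · have := (hDmem _).1 hd; omega
        exact ⟨hb, (hQ x hb).2 (Or.inl hx)⟩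
    rw [hfilt, Finset.card_image_of_injective _ hθinj, hdes]
    omega

end Des
section Count
variable {n : ℕ}

lemma card_not_cond (hn : 1 ≤ n) (π : Equiv.Perm (Fin n)) :
    (Finset.univ.filter (fun p : Fin (n+1) =>
      ¬(p.val < n ∧ ¬(1 ≤ p.val ∧ permVal π p.val < permVal π (p.val - 1))))).card
      = des n π + 1 := by
  set D := (range (n-1)).filter (fun j => permVal π (j+1) < permVal π j) with hD
  have hcard1 : (Finset.univ.filter (fun p : Fin (n+1) =>
      ¬(p.val < n ∧ ¬(1 ≤ p.val ∧ permVal π p.val < permVal π (p.val - 1))))).card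
      = ((range (n+1)).filter (fun j =>
      ¬(j < n ∧ ¬(1 ≤ j ∧ permVal π j < permVal π (j - 1))))).card := by
    apply Finset.card_nbij (fun p => p.val)
    · intro a ha
      rw [Finset.mem_coe, mem_filter, mem_range]
      rw [Finset.mem_coe, mem_filter] at ha
      exact ⟨a.isLt, ha.2⟩
    · intro a _ b _ hab; exact Fin.ext hab
    · intro j hj
      simp only [Finset.coe_filter, Set.mem_setOf_eq, mem_range] at hj
      refine ⟨⟨j, hj.1⟩, ?_, rfl⟩
      simp only [Finset.coe_filter, Set.mem_setOf_eq, mem_univ, true_and]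
      exact hj.2
  rw [hcard1]
  have hset : (range (n+1)).filter (fun j =>
      ¬(j < n ∧ ¬(1 ≤ j ∧ permVal π j < permVal π (j - 1))))
      = insert n (D.image (· + 1)) := by
    ext j
    simp only [mem_filter, mem_range, mem_insert, mem_image]
    constructor
    · rintro ⟨hj, hc⟩
      by_cases hjn : j = n
      · exact Or.inl hjn
      · have h2 : 1 ≤ j ∧ permVal π j < permVal π (j - 1) := by
          by_contra hh; exact hc ⟨by omega, hh⟩
        refine Or.inr ⟨j - 1, ?_, by omega⟩
        rw [hD, mem_filter, mem_range]
        rw [show j - 1 + 1 = j by omega]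
        exact ⟨by omega, h2.2⟩
    · rintro (rfl | ⟨i, hi, rfl⟩)
      · exact ⟨by omega, by omega⟩
      · rw [hD, mem_filter, mem_range] at hi
        refine ⟨by omega, ?_⟩
        rintro ⟨_, hc⟩
        rw [show i + 1 - 1 = i by omega] at hc
        exact hc ⟨by omega, hi.2⟩
  rw [hset, Finset.card_insert_of_notMem, Finset.card_image_of_injective _
    (add_left_injective 1)]
  · rfl
  · intro hmem
    simp only [mem_image] at hmem
    obtain ⟨i, hi, hin⟩ := hmem
    rw [hD, mem_filter, mem_range] at hi
    omega

lemma insPerm_bijective (hn : 1 ≤ n) :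
    Function.Bijective (fun x : Equiv.Perm (Fin n) × Fin (n+1) => insPerm x.1 x.2) := by
  rw [Fintype.bijective_iff_surjective_and_card]
  constructor
  · intro σ
    set p := σ.symm (Fin.last n) with hp
    set arg : Fin n → Fin (n+1) := fun i => if i.val < p.val then i.castSucc else i.succ
      with harg
    have hargne : ∀ i, arg i ≠ p := by
      intro i
      rw [harg]
      dsimp only
      split_ifs with h <;> (rw [Fin.ne_iff_vne]; simp; omega)
    have hlt : ∀ i, (σ (arg i)).val < n := by
      intro i
      have h1 : σ (arg i) ≠ Fin.last n := by
        intro hcc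
        exact hargne i (σ.injective (by rw [hcc, hp, Equiv.apply_symm_apply]))
      rw [Fin.ne_iff_vne, Fin.val_last] at h1
      have := (σ (arg i)).isLt
      omega
    have hg : Function.Injective (fun i : Fin n => (⟨(σ (arg i)).val, hlt i⟩ : Fin n)) := by
      intro a b hab
      rw [Fin.ext_iff] at hab
      simp only at hab
      have h2 : arg a = arg b := σ.injective (Fin.ext hab)
      rw [harg] at h2
      dsimp only at h2
      rw [Fin.ext_iff] at h2 ⊢
      split_ifs at h2 <;> simp at h2 <;> omega
    set g := Equiv.ofBijective _ ((Finite.injective_iff_bijective).1 hg) with hgdef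
    refine ⟨⟨g, p⟩, ?_⟩
    apply Equiv.ext
    intro j
    show insF g p j = σ j
    unfold insF
    by_cases h0 : j.val = p.val
    · rw [dif_pos h0]
      have : j = p := Fin.ext h0
      rw [this, hp, Equiv.apply_symm_apply]
    · rw [dif_neg h0]
      by_cases h1 : j.val < p.val
      · rw [dif_pos h1]
        apply Fin.ext
        rw [Fin.coe_castSucc, hgdef]
        simp only [Equiv.ofBijective_apply]
        show (σ (arg ⟨j.val, _⟩)).val = _
        rw [harg]
        simp only
        rw [if_pos (by simpa using h1)]
        have hae : Fin.castSucc (⟨j.val, by have := p.isLt; omega⟩ : Fin n) = j :=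
          Fin.ext (by simp)
        rw [hae]
      · rw [dif_neg h1]
        apply Fin.ext
        rw [Fin.coe_castSucc, hgdef]
        simp only [Equiv.ofBijective_apply]
        show (σ (arg ⟨j.val - 1, _⟩)).val = _
        rw [harg]
        simp only
        rw [if_neg (by simp; omega)]
        have hae : Fin.succ (⟨j.val - 1, by have := j.isLt; omega⟩ : Fin n) = j :=
          Fin.ext (by simp [Fin.val_succ]; omega)
        rw [hae]
  · simp only [Fintype.card_prod, Fintype.card_perm, Fintype.card_fin]
    rw [Nat.factorial_succ]
    ring

end Count
section Poly

noncomputable def Fub (n : ℕ) : Polynomial ℝ :=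
  ∑ i ∈ Finset.Icc 1 n, Polynomial.C ((i.factorial * stirling2 n i : ℕ) : ℝ) * Polynomial.X ^ i

noncomputable def Eul (n : ℕ) : Polynomial ℝ :=
  ∑ k ∈ Finset.Icc 1 n, Polynomial.C ((Anum n k : ℕ) : ℝ) * Polynomial.X ^ k
    * (1 + Polynomial.X) ^ (n - k)

lemma des_le {n : ℕ} (π : Equiv.Perm (Fin n)) : des n π ≤ n - 1 := by
  refine le_trans (Finset.card_filter_le _ _) ?_
  simp

lemma eul_eq_permSum {n : ℕ} (hn : 1 ≤ n) :
    Eul n = ∑ π : Equiv.Perm (Fin n),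
      Polynomial.X ^ (des n π + 1) * (1 + Polynomial.X) ^ (n - 1 - des n π) := by
  rw [Eul]
  have hmaps : ∀ π ∈ (Finset.univ : Finset (Equiv.Perm (Fin n))),
      des n π + 1 ∈ Finset.Icc 1 n := by
    intro π _
    rw [Finset.mem_Icc]
    have := des_le π
    omega
  rw [← Finset.sum_fiberwise_of_maps_to hmaps (fun π : Equiv.Perm (Fin n) =>
    ((Polynomial.X : Polynomial ℝ) ^ (des n π + 1)
      * (1 + Polynomial.X) ^ (n - 1 - des n π) : Polynomial ℝ))]
  apply Finset.sum_congr rfl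
  intro k hk
  rw [Finset.mem_Icc] at hk
  have : ∀ π ∈ Finset.univ.filter (fun π : Equiv.Perm (Fin n) => des n π + 1 = k),
      ((Polynomial.X : Polynomial ℝ) ^ (des n π + 1) * (1 + Polynomial.X) ^ (n - 1 - des n π)
        : Polynomial ℝ)
      = Polynomial.X ^ k * (1 + Polynomial.X) ^ (n - k) := by
    intro π hπ
    obtain ⟨-, hdk⟩ := Finset.mem_filter.1 hπ
    have h2 : n - 1 - des n π = n - k := by omega
    rw [hdk, h2]
  rw [Finset.sum_congr rfl this, Finset.sum_const, Anum, nsmul_eq_mul, mul_assoc,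
    Polynomial.C_eq_natCast]

lemma per_term (d e : ℕ) :
    Polynomial.X * (1 + Polynomial.X)
        * Polynomial.derivative (Polynomial.X ^ (d+1) * (1 + Polynomial.X) ^ e)
      + Polynomial.X * (Polynomial.X ^ (d+1) * (1 + Polynomial.X) ^ e)
    = ((e+1 : ℕ) : Polynomial ℝ) * (Polynomial.X ^ (d+2) * (1 + Polynomial.X) ^ e)
      + ((d+1 : ℕ) : Polynomial ℝ) * (Polynomial.X ^ (d+1) * (1 + Polynomial.X) ^ (e+1)) := by
  cases e with
  | zero =>
    simp only [pow_zero, mul_one, Polynomial.derivative_X_pow, Polynomial.C_eq_natCast]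
    push_cast
    ring
  | succ e' =>
    rw [Polynomial.derivative_mul, Polynomial.derivative_X_pow, Polynomial.derivative_pow]
    simp only [Polynomial.derivative_add, Polynomial.derivative_one, Polynomial.derivative_X,
      zero_add, mul_one, Nat.add_sub_cancel, Polynomial.C_eq_natCast]
    push_cast
    ring

lemma eul_rec {n : ℕ} (hn : 1 ≤ n) :
    Eul (n+1) = Polynomial.X * (1 + Polynomial.X) * Polynomial.derivative (Eul n)
      + Polynomial.X * Eul n := by
  rw [eul_eq_permSum hn, eul_eq_permSum (by omega)]
  rw [show (n + 1 - 1 : ℕ) = n by omega]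
  rw [← Fintype.sum_bijective _ (insPerm_bijective hn)
    (fun x : Equiv.Perm (Fin n) × Fin (n+1) =>
      ((Polynomial.X : Polynomial ℝ) ^ (des (n+1) (insPerm x.1 x.2) + 1)
        * (1 + Polynomial.X) ^ (n - des (n+1) (insPerm x.1 x.2)) : Polynomial ℝ))
    (fun σ : Equiv.Perm (Fin (n+1)) =>
      ((Polynomial.X : Polynomial ℝ) ^ (des (n+1) σ + 1)
        * (1 + Polynomial.X) ^ (n - des (n+1) σ) : Polynomial ℝ))
    (fun x => rfl)]
  rw [Fintype.sum_prod_type]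
  rw [Polynomial.derivative_sum, Finset.mul_sum, Finset.mul_sum, ← Finset.sum_add_distrib]
  apply Finset.sum_congr rfl
  intro π _
  have hd : des n π ≤ n - 1 := des_le π
  -- left side: sum over p
  have hstep : ∀ p : Fin (n+1),
      ((Polynomial.X : Polynomial ℝ) ^ (des (n+1) (insPerm π p) + 1)
        * (1 + Polynomial.X) ^ (n - des (n+1) (insPerm π p)) : Polynomial ℝ)
      = if (p.val < n ∧ ¬(1 ≤ p.val ∧ permVal π p.val < permVal π (p.val - 1)))
        then Polynomial.X ^ (des n π + 2) * (1 + Polynomial.X) ^ (n - 1 - des n π)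
        else Polynomial.X ^ (des n π + 1) * (1 + Polynomial.X) ^ (n - des n π) := by
    intro p
    rw [des_insPerm hn π p]
    split_ifs with hc
    · rw [show des n π + 1 + 1 = des n π + 2 by omega,
        show n - (des n π + 1) = n - 1 - des n π by omega]
    · norm_num
  rw [Finset.sum_congr rfl (fun p _ => hstep p), Finset.sum_ite, Finset.sum_const,
    Finset.sum_const, card_not_cond hn π]
  have hcards : (Finset.univ.filter (fun p : Fin (n+1) =>
      (p.val < n ∧ ¬(1 ≤ p.val ∧ permVal π p.val < permVal π (p.val - 1))))).card
      = n - des n π := by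
    have h1 := Finset.card_filter_add_card_filter_not
      (s := (Finset.univ : Finset (Fin (n+1))))
      (fun p : Fin (n+1) =>
        (p.val < n ∧ ¬(1 ≤ p.val ∧ permVal π p.val < permVal π (p.val - 1))))
    rw [card_not_cond hn π] at h1
    rw [Finset.card_univ, Fintype.card_fin] at h1
    omega
  rw [hcards]
  rw [per_term (des n π) (n - 1 - des n π)]
  rw [show n - 1 - des n π + 1 = n - des n π by omega,
    show des n π + 1 + 1 = des n π + 2 by omega]
  rw [nsmul_eq_mul, nsmul_eq_mul]

end Poly
section FubSide
open Polynomial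

lemma stirling2_succ (n k : ℕ) :
    stirling2 (n+1) (k+1) = (k+1) * stirling2 n (k+1) + stirling2 n k := rfl

lemma stirling2_zero {n : ℕ} (hn : 1 ≤ n) : stirling2 n 0 = 0 := by
  cases n with
  | zero => omega
  | succ m => rfl

lemma stirling2_of_lt : ∀ {n k : ℕ}, n < k → stirling2 n k = 0 := by
  intro n
  induction n with
  | zero =>
    intro k h
    cases k with
    | zero => omega
    | succ m => rfl
  | succ m ih =>
    intro k h
    cases k with
    | zero => omega
    | succ k' =>
      rw [stirling2_succ, ih (by omega), ih (by omega)]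
      ring

lemma sum_Icc_one (m : ℕ) (f : ℕ → Polynomial ℝ) :
    (∑ i ∈ Finset.Icc 1 m, f i) = ∑ j ∈ Finset.range m, f (j+1) := by
  rw [← Finset.Ico_add_one_right_eq_Icc, Finset.sum_Ico_eq_sum_range]
  simp [add_comm]

lemma fub_term (m j : ℕ) :
    X * (1 + X) * (derivative (C ((m : ℕ) : ℝ) * X ^ (j+1)))
      + X * (C ((m : ℕ) : ℝ) * X ^ (j+1))
    = C ((((j+1) * m : ℕ)) : ℝ) * X ^ (j+1) + C ((((j+2) * m : ℕ)) : ℝ) * X ^ (j+2) := by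
  rw [Polynomial.derivative_C_mul, Polynomial.derivative_X_pow, Nat.add_sub_cancel]
  simp only [Polynomial.C_eq_natCast]
  push_cast
  ring

lemma fub_rec {n : ℕ} (hn : 1 ≤ n) :
    Fub (n+1) = X * (1 + X) * (derivative (Fub n)) + X * Fub n := by
  rw [Fub, Fub, sum_Icc_one, sum_Icc_one]
  rw [Polynomial.derivative_sum, Finset.mul_sum, Finset.mul_sum, ← Finset.sum_add_distrib]
  rw [Finset.sum_congr rfl (fun j _ => fub_term ((j+1).factorial * stirling2 n (j+1)) j)]
  have hL : ∀ j ∈ Finset.range (n+1),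
      C ((((j+1).factorial * stirling2 (n+1) (j+1) : ℕ)) : ℝ) * X ^ (j+1)
      = C ((((j+1) * ((j+1).factorial * stirling2 n (j+1)) : ℕ)) : ℝ) * X ^ (j+1)
        + C ((((j+1) * (j.factorial * stirling2 n j) : ℕ)) : ℝ) * X ^ (j+1) := by
    intro j _
    rw [← add_mul, ← Polynomial.C_add, ← Nat.cast_add]
    have : (j+1).factorial * stirling2 (n+1) (j+1)
        = (j+1) * ((j+1).factorial * stirling2 n (j+1)) + (j+1) * (j.factorial * stirling2 n j) := by
      rw [stirling2_succ, Nat.factorial_succ]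
      ring
    rw [this]
  rw [Finset.sum_congr rfl hL, Finset.sum_add_distrib]
  rw [Finset.sum_range_succ, stirling2_of_lt (Nat.lt_succ_self n)]
  rw [Finset.sum_range_succ' _ n, stirling2_zero hn]
  simp only [Nat.mul_zero, Nat.cast_zero, mul_zero, zero_mul, Polynomial.C_0, add_zero,
    Nat.factorial_zero, Nat.cast_one, one_mul, Nat.mul_one]
  rw [← Finset.sum_add_distrib]
end FubSide
section Final
open Polynomial

lemma fub_eul_one : Fub 1 = Eul 1 := by
  have hA : Anum 1 1 = 1 := by
    rw [Anum]
    have hall : ∀ π : Equiv.Perm (Fin 1), des 1 π + 1 = 1 := by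
      intro π
      rw [des]
      simp
    rw [Finset.filter_true_of_mem (fun π _ => hall π), Finset.card_univ, Fintype.card_perm,
      Fintype.card_fin]
    rfl
  have hS : stirling2 1 1 = 1 := rfl
  rw [Fub, Eul]
  rw [Finset.Icc_self, Finset.sum_singleton, Finset.sum_singleton, hA, hS]
  norm_num

lemma fub_eq_eul : ∀ n, 1 ≤ n → Fub n = Eul n := by
  intro n hn
  induction n with
  | zero => omega
  | succ m ih =>
    rcases Nat.lt_or_ge 1 (m + 1) with h | h
    · have hm : 1 ≤ m := by omega
      rw [fub_rec hm, eul_rec hm, ih hm]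
    · have : m = 0 := by omega
      subst this
      exact fub_eul_one

theorem an_eq' (n : ℕ) (hn : 1 ≤ n) :
    (Polynomial.X + 1) *
        ∑ i ∈ Finset.Icc 1 n,
          Polynomial.C ((i.factorial * stirling2 n i * 2 ^ (n - i) : ℕ) : ℝ) *
            (Polynomial.X - 1) ^ i =
      ∑ k ∈ Finset.Icc 1 n,
        Polynomial.C ((Anum n k : ℝ)) *
          (Polynomial.X - 1) ^ k * (Polynomial.X + 1) ^ (n - k + 1) := by
  have key := fub_eq_eul n hn
  set q : Polynomial ℝ := Polynomial.C (2⁻¹:ℝ) * (Polynomial.X - 1) with hq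
  have h12 : (2 : Polynomial ℝ) * Polynomial.C (2⁻¹:ℝ) = 1 := by
    rw [← map_ofNat (Polynomial.C : ℝ →+* Polynomial ℝ) 2, ← Polynomial.C_mul]
    norm_num
  have hone : (1 : Polynomial ℝ) + q = Polynomial.C (2⁻¹:ℝ) * (Polynomial.X + 1) := by
    rw [hq]
    linear_combination -h12
  have hFub : (Polynomial.X + 1) *
      ∑ i ∈ Finset.Icc 1 n,
        Polynomial.C ((i.factorial * stirling2 n i * 2 ^ (n - i) : ℕ) : ℝ) *
          (Polynomial.X - 1) ^ i
      = (Polynomial.X + 1) * (Polynomial.C ((2:ℝ)^n) * Polynomial.aeval q (Fub n)) := by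
    rw [Fub, map_sum, Finset.mul_sum, Finset.mul_sum, Finset.mul_sum]
    apply Finset.sum_congr rfl
    intro i hi
    rw [Finset.mem_Icc] at hi
    simp only [map_mul, map_pow, Polynomial.aeval_X, Polynomial.aeval_C,
      Polynomial.algebraMap_eq]
    have hr : ((2:ℝ))^(n-i) = 2^n * (2⁻¹)^i := by
      rw [inv_pow, pow_sub₀ (2:ℝ) (by norm_num) hi.2]

    have hc : ((i.factorial * stirling2 n i * 2 ^ (n - i) : ℕ) : ℝ)
        = 2^n * ((i.factorial * stirling2 n i : ℕ) : ℝ) * (2⁻¹)^i := by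
      push_cast
      rw [hr]
      ring
    rw [hc]
    simp only [Polynomial.C_mul, Polynomial.C_pow]
    rw [hq, mul_pow]
    ring
  have hEul : (∑ k ∈ Finset.Icc 1 n,
        Polynomial.C ((Anum n k : ℝ)) *
          (Polynomial.X - 1) ^ k * (Polynomial.X + 1) ^ (n - k + 1))
      = (Polynomial.X + 1) * (Polynomial.C ((2:ℝ)^n) * Polynomial.aeval q (Eul n)) := by
    rw [Eul, map_sum, Finset.mul_sum, Finset.mul_sum]
    apply Finset.sum_congr rfl
    intro k hk
    rw [Finset.mem_Icc] at hk
    simp only [map_mul, map_pow, map_add, map_one, Polynomial.aeval_X, Polynomial.aeval_C,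
      Polynomial.algebraMap_eq]
    rw [hone]
    have hk2 : ((2:ℝ))^n * ((2⁻¹:ℝ))^k * (2⁻¹)^(n-k) = 1 := by
      rw [mul_assoc, ← pow_add, show k + (n-k) = n by omega, ← mul_pow]
      norm_num
    have hC : (Polynomial.C (2:ℝ))^n * (Polynomial.C (2⁻¹:ℝ))^k
        * (Polynomial.C (2⁻¹:ℝ))^(n-k) = 1 := by
      rw [← Polynomial.C_pow, ← Polynomial.C_pow, ← Polynomial.C_pow, ← Polynomial.C_mul,
        ← Polynomial.C_mul, hk2, Polynomial.C_1]
    rw [hq, mul_pow, mul_pow]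
    linear_combination -(Polynomial.C ((Anum n k : ℝ)) * (Polynomial.X - 1) ^ k
      * (Polynomial.X + 1) ^ (n - k + 1)) * hC
  rw [hFub, hEul, key]

end Final

/-- `a_n(y) = (y+1)∑_{i=1}^n i! S(n,i) 2^{n-i}(y-1)^i = ∑_{k=1}^n A(n,k)(y-1)^k(y+1)^{n-k+1}`. -/
theorem an_eq (n : ℕ) (hn : 1 ≤ n) :
    (Polynomial.X + 1) *
        ∑ i ∈ Finset.Icc 1 n,
          Polynomial.C ((i.factorial * stirling2 n i * 2 ^ (n - i) : ℕ) : ℝ) *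
            (Polynomial.X - 1) ^ i =
      ∑ k ∈ Finset.Icc 1 n,
        Polynomial.C ((Anum n k : ℝ)) *
          (Polynomial.X - 1) ^ k * (Polynomial.X + 1) ^ (n - k + 1) :=
  an_eq' n hn
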